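/- For arbitrary positive definite real matrices A, B, C of the same size, det(A + B + C) + det(A) ≥ det(A + B) + det(A + C). -/

import Mathlib

open Matrix
open scoped MatrixOrder

variable {m : Type*} [Fintype m] [DecidableEq m]


lemma pd_conj {A : Matrix m m ℝ} (hA : A.PosDef) {B : Matrix m m ℝ}
    (hB : IsUnit B.det) : (Bᴴ * A * B).PosDef := by
  refine PosDef.of_dotProduct_mulVec_pos (isHermitian_conjTranspose_mul_mul B hA.1) fun x hx => ?_
  have hBx : B *ᵥ x ≠ 0 := by
    intro h
    have h2 : B⁻¹ *ᵥ (B *ᵥ x) = x := by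
      rw [mulVec_mulVec, nonsing_inv_mul B hB, one_mulVec]
    rw [h, mulVec_zero] at h2
    exact hx h2.symm
  simpa only [star_mulVec, dotProduct_mulVec, vecMul_vecMul] using hA.dotProduct_mulVec_pos hBx

lemma pd_submatrix {A : Matrix m m ℝ} (hA : A.PosDef)
    {k : Type*} [Fintype k] [DecidableEq k] {e : k → m} (he : Function.Injective e) :
    (A.submatrix e e).PosDef := by
  set P : Matrix m k ℝ := (1 : Matrix m m ℝ).submatrix id e with hP
  have hrw : Pᴴ * A * P = A.submatrix e e := by
    ext i j
    simp [P, mul_apply, one_apply, conjTranspose_apply, Finset.sum_ite_eq,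
      Finset.sum_ite_eq']
  rw [← hrw]
  refine PosDef.of_dotProduct_mulVec_pos (isHermitian_conjTranspose_mul_mul P hA.1) fun x hx => ?_
  have hPx : P *ᵥ x ≠ 0 := by
    intro h
    apply hx
    funext i
    have := congrFun h (e i)
    simp only [mulVec, dotProduct, P, submatrix_apply, id_eq, one_apply, Pi.zero_apply] at this
    simpa [he.eq_iff, eq_comm, Finset.sum_ite_eq] using this
  simpa only [star_mulVec, dotProduct_mulVec, vecMul_vecMul] using hA.dotProduct_mulVec_pos hPx

lemma det_piecewise (M : Matrix m m ℝ) (s : Finset m) :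
    Matrix.det (s.piecewise M (1 : Matrix m m ℝ)) =
      (M.submatrix (Subtype.val : {i // i ∈ s} → m) Subtype.val).det := by
  classical
  let e : {i // i ∈ s} ⊕ {i // ¬ i ∈ s} ≃ m := Equiv.sumCompl (· ∈ s)
  rw [← Matrix.det_submatrix_equiv_self e (s.piecewise M (1 : Matrix m m ℝ))]
  have hrw : Matrix.submatrix (s.piecewise M (1 : Matrix m m ℝ)) e e =
      fromBlocks (M.submatrix Subtype.val Subtype.val)
        (M.submatrix Subtype.val (Subtype.val : {i // ¬ i ∈ s} → m)) 0 1 := by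
    ext i j
    show s.piecewise M (1 : Matrix m m ℝ) (e i) (e j) = _
    dsimp only [Finset.piecewise]
    rcases i with ⟨i, hi⟩ | ⟨i, hi⟩ <;> rcases j with ⟨j, hj⟩ | ⟨j, hj⟩
    · simp [e, submatrix_apply, hi]
    · simp [e, submatrix_apply, hi]
    · split_ifs with hh
      · exact absurd hh hi
      simp only [submatrix_apply, Equiv.sumCompl_apply_inr, Equiv.sumCompl_apply_inl, e,
        Finset.piecewise_eq_of_notMem _ _ _ hi, fromBlocks_apply₂₁, Pi.zero_apply,
        Matrix.zero_apply, one_apply, ite_eq_right_iff]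
      split_ifs with h
      · exact absurd hj (h ▸ hi)
      · exact if_neg h
    · split_ifs with hh
      · exact absurd hh hi
      simp only [submatrix_apply, Equiv.sumCompl_apply_inr, e,
        Finset.piecewise_eq_of_notMem _ _ _ hi, fromBlocks_apply₂₂, one_apply]
      simp [Subtype.ext_iff]
      split_ifs with h
      · exact if_pos h
      · exact if_neg h
  rw [hrw, det_fromBlocks_zero₂₁, det_one, mul_one]

lemma det_one_add_expand (M : Matrix m m ℝ) :
    (1 + M).det = ∑ s : Finset m,
      (M.submatrix (Subtype.val : {i // i ∈ s} → m) Subtype.val).det := by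
  rw [add_comm]
  have h := (detRowAlternating : (m → ℝ) [⋀^m]→ₗ[ℝ] ℝ).toMultilinearMap.map_add_univ
    M (1 : Matrix m m ℝ)
  simp only [← det_piecewise]
  exact h

lemma psd_det_nonneg {M : Matrix m m ℝ} (hM : M.PosSemidef) : 0 ≤ M.det := by
  rw [hM.1.det_eq_prod_eigenvalues]
  exact Finset.prod_nonneg fun i _ => by simpa using hM.eigenvalues_nonneg i

lemma det_one_add_ge (M : Matrix m m ℝ) [Nonempty m] (hM : M.PosSemidef) :
    1 + M.det ≤ (1 + M).det := by
  classical
  rw [det_one_add_expand M]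
  have hne : (∅ : Finset m) ≠ Finset.univ := (Finset.univ_nonempty.ne_empty).symm
  have hemp : (M.submatrix (Subtype.val : {i // i ∈ (∅ : Finset m)} → m) Subtype.val).det = 1 := by
    rw [← det_piecewise]; exact (congrArg det (Finset.piecewise_empty _ _)).trans det_one
  have huniv :
      (M.submatrix (Subtype.val : {i // i ∈ (Finset.univ : Finset m)} → m) Subtype.val).det
        = M.det := by
    rw [← det_piecewise]; exact congrArg det (Finset.piecewise_univ _ _)
  calc 1 + M.det
      = ∑ s ∈ ({∅, Finset.univ} : Finset (Finset m)),
          (M.submatrix (Subtype.val : {i // i ∈ s} → m) Subtype.val).det := by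
        rw [Finset.sum_pair hne, hemp, huniv]
    _ ≤ ∑ s : Finset m,
          (M.submatrix (Subtype.val : {i // i ∈ s} → m) Subtype.val).det := by
        refine Finset.sum_le_sum_of_subset_of_nonneg (Finset.subset_univ _)
          (fun s _ _ => psd_det_nonneg (hM.submatrix Subtype.val))

lemma det_superadd [Nonempty m] {X Y : Matrix m m ℝ} (hX : X.PosDef) (hY : Y.PosSemidef) :
    X.det + Y.det ≤ (X + Y).det := by
  classical
  set S := CFC.sqrt X with hSdef
  have hSS : S * S = X := CFC.sqrt_mul_sqrt_self X hX.posSemidef.nonneg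
  have hSherm : Sᴴ = S := (CFC.sqrt_nonneg X).posSemidef.1
  have hdet : S.det * S.det = X.det := by rw [← det_mul, hSS]
  have hXdetpos : 0 < X.det := hX.det_pos
  have hSunit : IsUnit S.det := by
    rw [isUnit_iff_ne_zero]
    intro h
    rw [h, mul_zero] at hdet
    exact hXdetpos.ne' hdet.symm
  have h1 : S * S⁻¹ = 1 := mul_nonsing_inv S hSunit
  have h2 : S⁻¹ * S = 1 := nonsing_inv_mul S hSunit
  set M := S⁻¹ * Y * S⁻¹ with hMdef
  have hMpsd : M.PosSemidef := by
    have := hY.conjTranspose_mul_mul_same (S⁻¹)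
    rwa [conjTranspose_nonsing_inv, hSherm] at this
  have hYs : S * M * S = Y := by
    rw [hMdef]
    simp only [Matrix.mul_assoc, h2, Matrix.mul_one]
    rw [← Matrix.mul_assoc, h1, Matrix.one_mul]
  have hXYs : S * (1 + M) * S = X + Y := by
    rw [Matrix.mul_add, Matrix.mul_one, Matrix.add_mul, hSS, hYs]
  have d1 : (X + Y).det = X.det * (1 + M).det := by
    rw [← hXYs, det_mul, det_mul, ← hdet]; ring
  have d2 : Y.det = X.det * M.det := by
    rw [← hYs, det_mul, det_mul, ← hdet]; ring
  rw [d1, d2]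
  have key := det_one_add_ge M hMpsd
  nlinarith [hXdetpos, key]

theorem det_add_add_add_det_ge {n : ℕ} (A B C : Matrix (Fin n) (Fin n) ℝ)
    (hA : A.PosDef) (hB : B.PosDef) (hC : C.PosDef) :
    (A + B).det + (A + C).det ≤ (A + B + C).det + A.det := by
  classical
  set S := CFC.sqrt A with hSdef
  have hSS : S * S = A := CFC.sqrt_mul_sqrt_self A hA.posSemidef.nonneg
  have hSherm : Sᴴ = S := (CFC.sqrt_nonneg A).posSemidef.1
  have hdet : S.det * S.det = A.det := by rw [← det_mul, hSS]
  have hAdetpos : 0 < A.det := hA.det_pos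
  have hSunit : IsUnit S.det := by
    rw [isUnit_iff_ne_zero]
    intro h
    rw [h, mul_zero] at hdet
    exact hAdetpos.ne' hdet.symm
  have h1 : S * S⁻¹ = 1 := mul_nonsing_inv S hSunit
  have h2 : S⁻¹ * S = 1 := nonsing_inv_mul S hSunit
  have hSinvH : (S⁻¹)ᴴ = S⁻¹ := by rw [conjTranspose_nonsing_inv, hSherm]
  have hSinvUnit : IsUnit (S⁻¹).det := by
    rw [isUnit_iff_ne_zero]
    intro h
    have := det_mul S S⁻¹
    rw [h1, det_one, h, mul_zero] at this
    exact one_ne_zero this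
  set B' := S⁻¹ * B * S⁻¹ with hB'def
  set C' := S⁻¹ * C * S⁻¹ with hC'def
  have hB' : B'.PosDef := by
    have := pd_conj hB hSinvUnit
    rwa [hSinvH] at this
  have hC' : C'.PosDef := by
    have := pd_conj hC hSinvUnit
    rwa [hSinvH] at this
  have hconj : ∀ X : Matrix (Fin n) (Fin n) ℝ, S * (S⁻¹ * X * S⁻¹) * S = X := by
    intro X
    simp only [Matrix.mul_assoc, h2, Matrix.mul_one]
    rw [← Matrix.mul_assoc, h1, Matrix.one_mul]
  have hcong : ∀ Z : Matrix (Fin n) (Fin n) ℝ, (S * Z * S).det = A.det * Z.det := by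
    intro Z
    rw [det_mul, det_mul, ← hdet]; ring
  have eAB : A + B = S * (1 + B') * S := by
    rw [Matrix.mul_add, Matrix.mul_one, Matrix.add_mul, hSS, hconj B]
  have eAC : A + C = S * (1 + C') * S := by
    rw [Matrix.mul_add, Matrix.mul_one, Matrix.add_mul, hSS, hconj C]
  have eABC : A + B + C = S * (1 + (B' + C')) * S := by
    rw [Matrix.mul_add, Matrix.mul_one, Matrix.add_mul, hSS, Matrix.mul_add, Matrix.add_mul,
      hconj B, hconj C, add_assoc]
  rw [eABC, eAB, eAC, hcong, hcong, hcong]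
  have main : (1 + B').det + (1 + C').det ≤ (1 + (B' + C')).det + 1 := by
    rw [det_one_add_expand B', det_one_add_expand C', det_one_add_expand (B' + C'),
      ← Finset.sum_add_distrib]
    have hsum : ∑ s : Finset (Fin n), (if s = (∅ : Finset (Fin n)) then (1 : ℝ) else 0) = 1 := by
      simp
    calc ∑ s : Finset (Fin n),
          ((B'.submatrix (Subtype.val : {i // i ∈ s} → Fin n) Subtype.val).det +
           (C'.submatrix (Subtype.val : {i // i ∈ s} → Fin n) Subtype.val).det)
        ≤ ∑ s : Finset (Fin n),
          (((B' + C').submatrix (Subtype.val : {i // i ∈ s} → Fin n) Subtype.val).det +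
            if s = ∅ then (1 : ℝ) else 0) := by
          refine Finset.sum_le_sum fun s _ => ?_
          by_cases hs : s = ∅
          · subst hs
            simp only [if_pos rfl]
            rw [← det_piecewise, ← det_piecewise, ← det_piecewise,
              (Finset.piecewise_empty B' (1 : Matrix (Fin n) (Fin n) ℝ)),
              (Finset.piecewise_empty C' (1 : Matrix (Fin n) (Fin n) ℝ)),
              (Finset.piecewise_empty (B' + C') (1 : Matrix (Fin n) (Fin n) ℝ)), det_one]
            norm_num
          · haveI : Nonempty {i // i ∈ s} := by
              rw [Finset.nonempty_coe_sort]
              exact Finset.nonempty_iff_ne_empty.2 hs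
            rw [if_neg hs, add_zero]
            have hadd : (B' + C').submatrix (Subtype.val : {i // i ∈ s} → Fin n)
                  (Subtype.val : {i // i ∈ s} → Fin n) =
                B'.submatrix (Subtype.val : {i // i ∈ s} → Fin n)
                    (Subtype.val : {i // i ∈ s} → Fin n) +
                  C'.submatrix (Subtype.val : {i // i ∈ s} → Fin n)
                    (Subtype.val : {i // i ∈ s} → Fin n) := by
              ext i j; simp [submatrix_apply]
            rw [hadd]
            exact det_superadd (pd_submatrix hB' Subtype.val_injective)
              (pd_submatrix hC' Subtype.val_injective).posSemidef
      _ = (∑ s : Finset (Fin n),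
            ((B' + C').submatrix (Subtype.val : {i // i ∈ s} → Fin n) Subtype.val).det) + 1 := by
          rw [Finset.sum_add_distrib, hsum]
  nlinarith [hAdetpos, main]
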